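/- For all r ≥ 1 and n sufficiently large, ℓ_n(3,2,r) = (1/4)((r+1)^2 − 1_{r even}): the minimum size of a contagious set of pairs for bootstrap percolation on K_n^3 with threshold r is exactly ⌈(r+1)^2/4⌉ adjusted by parity, i.e., ((r+1)^2 − [r even])/4. -/

import Mathlib

open Finset

open Classical in
noncomputable def bootStep (V : Finset ℕ) (E : Finset (Finset ℕ)) (j r : ℕ)
    (A : Finset (Finset ℕ)) : Finset (Finset ℕ) :=
  A ∪ (V.powersetCard j).filter (fun J =>
    ∃ K : Fin r → Finset ℕ, ∃ Js : Fin r → Finset ℕ,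
      Function.Injective K ∧ Function.Injective Js ∧
      ∀ i : Fin r, K i ∈ E ∧ Js i ∈ A ∧ Js i ∪ J ⊆ K i)

/-- The infected sets at time `t` of the bootstrap percolation process on a hypergraph
with vertex set `V`, edge set `E`, evolving on `j`-sets with infection threshold `r`. -/
noncomputable def bootProc (V : Finset ℕ) (E : Finset (Finset ℕ)) (j r : ℕ)
    (A0 : Finset (Finset ℕ)) (t : ℕ) : Finset (Finset ℕ) :=
  (bootStep V E j r)^[t] A0

/-- The process on the complete `k`-uniform hypergraph on `V`. -/
noncomputable def compProc (V : Finset ℕ) (k j r : ℕ)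
    (A0 : Finset (Finset ℕ)) (t : ℕ) : Finset (Finset ℕ) :=
  bootProc V (V.powersetCard k) j r A0 t

/-- `A0` is contagious: eventually all `j`-sets of `V` are infected. -/
def Percolates (V : Finset ℕ) (k j r : ℕ) (A0 : Finset (Finset ℕ)) : Prop :=
  ∃ t, compProc V k j r A0 t = V.powersetCard j

/-- `ℓ_n(k,j,r)`: minimum size of a contagious `j`-configuration in `K_n^k`. -/
noncomputable def ellMin (n k j r : ℕ) : ℕ :=
  sInf {m | ∃ A0 : Finset (Finset ℕ), A0 ⊆ (range n).powersetCard j ∧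
    A0.card = m ∧ Percolates (range n) k j r A0}

open Classical in
/-- The extension set of a `(k-1)`-set `J` with respect to configuration `C` in the
complete `k`-uniform hypergraph on `V`. -/
noncomputable def extSet (V : Finset ℕ) (k : ℕ) (C : Finset (Finset ℕ))
    (J : Finset ℕ) : Finset ℕ :=
  V.filter (fun v => ∃ J' ∈ C, J' ≠ J ∧ J' ⊆ insert v J ∧ insert v J ∈ V.powersetCard k)

section Infra

variable {V : Finset ℕ} {E : Finset (Finset ℕ)} {j r k : ℕ} {A B A0 : Finset (Finset ℕ)}

lemma subset_bootStep : A ⊆ bootStep V E j r A := subset_union_left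

lemma compProc_succ (t : ℕ) :
    compProc V k j r A0 (t+1) = bootStep V (V.powersetCard k) j r (compProc V k j r A0 t) := by
  simp only [compProc, bootProc, Function.iterate_succ_apply']

lemma compProc_zero : compProc V k j r A0 0 = A0 := rfl

lemma compProc_mono_succ (t : ℕ) : compProc V k j r A0 t ⊆ compProc V k j r A0 (t+1) := by
  rw [compProc_succ]; exact subset_bootStep

lemma bootStep_subset_pairs (h : A ⊆ V.powersetCard j) :
    bootStep V E j r A ⊆ V.powersetCard j := by
  classical
  unfold bootStep
  exact union_subset h (filter_subset _ _)

lemma compProc_subset_pairs (h : A0 ⊆ V.powersetCard j) (t : ℕ) :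
    compProc V k j r A0 t ⊆ V.powersetCard j := by
  induction t with
  | zero => exact h
  | succ t ih => rw [compProc_succ]; exact bootStep_subset_pairs ih

lemma compProc_fix (h : bootStep V (V.powersetCard k) j r A0 = A0) (t : ℕ) :
    compProc V k j r A0 t = A0 := by
  induction t with
  | zero => rfl
  | succ t ih => rw [compProc_succ, ih, h]

end Infra

/-- Key membership helper for `j = 2`, `k = 3`. -/
lemma add_pair {V : Finset ℕ} {A : Finset (Finset ℕ)} {r : ℕ} {J : Finset ℕ}
    (hJ : J ∈ V.powersetCard 2) {W : Finset ℕ} (hWr : r ≤ W.card)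
    (hWV : W ⊆ V) (hWJ : ∀ w ∈ W, w ∉ J)
    (hwit : ∀ w ∈ W, ∃ e ∈ A, e ⊆ insert w J ∧ w ∈ e) :
    J ∈ bootStep V (V.powersetCard 3) 2 r A := by
  classical
  obtain ⟨W', hW'W, hW'card⟩ := Finset.exists_subset_card_eq hWr
  choose e he hesub hemem using hwit
  let f : Fin r ≃o {x // x ∈ W'} := W'.orderIsoOfFin hW'card
  have hfW : ∀ i : Fin r, (f i : ℕ) ∈ W := fun i => hW'W (f i).2
  have hfJ : ∀ i, (f i : ℕ) ∉ J := fun i => hWJ _ (hfW i)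
  obtain ⟨hJV, hJ2⟩ := mem_powersetCard.mp hJ
  have hmain : ∃ K : Fin r → Finset ℕ, ∃ Js : Fin r → Finset ℕ,
      Function.Injective K ∧ Function.Injective Js ∧
      ∀ i : Fin r, K i ∈ V.powersetCard 3 ∧ Js i ∈ A ∧ Js i ∪ J ⊆ K i := by
    refine ⟨fun i => insert ((f i : ℕ)) J, fun i => e _ (hfW i), ?_, ?_, ?_⟩
    · intro i i' hii
      have hii' : insert ((f i : ℕ)) J = insert ((f i' : ℕ)) J := hii
      have h1 : (f i : ℕ) ∈ insert ((f i' : ℕ)) J := hii' ▸ mem_insert_self _ _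
      rcases mem_insert.mp h1 with h | h
      · exact f.injective (Subtype.ext h)
      · exact absurd h (hfJ i)
    · intro i i' hii
      have hii' : e _ (hfW i) = e _ (hfW i') := hii
      have h1 : (f i : ℕ) ∈ e _ (hfW i') := hii' ▸ hemem _ (hfW i)
      rcases mem_insert.mp (hesub _ (hfW i') h1) with h | h
      · exact f.injective (Subtype.ext h)
      · exact absurd h (hfJ i)
    · intro i
      refine ⟨?_, he _ (hfW i), union_subset (hesub _ (hfW i)) (subset_insert _ _)⟩
      rw [mem_powersetCard]
      exact ⟨insert_subset (hWV (hfW i)) hJV,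
        by rw [card_insert_of_notMem (hfJ i), hJ2]⟩
  unfold bootStep
  rw [mem_union, mem_filter]
  exact Or.inr ⟨hJ, hmain⟩

def lb (r : ℕ) : ℕ := ((r+3)/2).choose 2 + (r+2-(r+3)/2).choose 2

lemma two_mul_choose_two (m : ℕ) : 2 * m.choose 2 = m * (m-1) := by
  rw [Nat.choose_two_right]
  rcases Nat.even_or_odd m with ⟨s, hs⟩ | ⟨s, hs⟩
  · subst hs
    have h : s + s = 2 * s := by ring
    rw [h]
    have h2 : 2*s*(2*s-1) = 2*(s*(2*s-1)) := by ring
    rw [h2, Nat.mul_div_cancel_left _ (by norm_num)]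
  · subst hs
    have h1 : 2*s+1-1 = 2*s := by omega
    rw [h1]
    have h2 : (2*s+1)*(2*s) = 2*((2*s+1)*s) := by ring
    rw [h2, Nat.mul_div_cancel_left _ (by norm_num)]

lemma succ_choose_two (s : ℕ) : 2 * (s+1).choose 2 = (s+1)*s := by
  rw [two_mul_choose_two, Nat.add_sub_cancel]

lemma lb4 (r : ℕ) : 4 * lb r = (r+1)^2 - (if Even r then 1 else 0) := by
  rcases Nat.even_or_odd r with ⟨s, hs⟩ | ⟨s, hs⟩
  · have he : Even r := ⟨s, hs⟩
    subst hs
    simp only [lb, if_pos he]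
    have ha : (s+s+3)/2 = s+1 := by omega
    rw [ha]
    have hb : s+s+2-(s+1) = s+1 := by omega
    rw [hb]
    have h1 := succ_choose_two s
    have h2 : (s+s+1)^2 = 4*((s+1)*s) + 1 := by ring
    omega
  · have he : ¬ Even (2*s+1) := by simp [Nat.even_iff, Nat.add_mul_mod_self_left]
    have hs2 : r = 2*s+1 := by omega
    subst hs2
    simp only [lb, if_neg he]
    have ha : (2*s+1+3)/2 = s+2 := by omega
    rw [ha]
    have hb : 2*s+1+2-(s+2) = s+1 := by omega
    rw [hb]
    have h1 : 2 * (s+2).choose 2 = (s+2)*(s+1) := by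
      have h0 : (s+2) - 1 = s+1 := by omega
      rw [two_mul_choose_two, h0]
    have h2 := succ_choose_two s
    have h3 : (2*s+1+1)^2 = 2*((s+2)*(s+1)) + 2*((s+1)*s) := by ring
    omega

lemma lb_rec' (m : ℕ) : lb (m+3) = lb (m+1) + (m+3) := by
  have h1 := lb4 (m+3)
  have h2 := lb4 (m+1)
  have he : (if Even (m+3) then 1 else 0) = (if Even (m+1) then 1 else 0) := by
    have : Even (m+3) ↔ Even (m+1) := by
      constructor <;> intro h
      · rcases h with ⟨t, ht⟩; exact ⟨t-1, by omega⟩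
      · rcases h with ⟨t, ht⟩; exact ⟨t+1, by omega⟩
    simp [this]
  have hs1 : (m+3+1)^2 = m^2 + 8*m + 16 := by ring
  have hs2 : (m+1+1)^2 = m^2 + 4*m + 4 := by ring
  have hite : (if Even (m+1) then 1 else 0) ≤ 1 := by split <;> omega
  omega

lemma lb_one : lb 1 = 1 := by decide
lemma lb_two : lb 2 = 2 := by decide

lemma lb_le_choose {r m : ℕ} (h : 2*r+2 ≤ m) : lb r ≤ m.choose 2 := by
  have h1 : lb r ≤ (2*r+2).choose 2 := by
    have h2 : 2 * ((2*r+2).choose 2) = (2*r+2)*(2*r+1) := by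
      have := two_mul_choose_two (2*r+2)
      have h' : 2*r+2-1 = 2*r+1 := by omega
      rw [h'] at this
      exact this
    have h3 := lb4 r
    have h4 : (r+1)^2 ≤ 2*((2*r+2)*(2*r+1)) := by nlinarith
    have hite : (if Even r then 1 else 0) ≤ 1 := by split <;> omega
    omega
  exact h1.trans (Nat.choose_le_choose 2 h)

section Upper

lemma stage1 (r n : ℕ) (hn : r+2 ≤ n) :
    (range (r+2)).powersetCard 2 ⊆ bootStep (range n) ((range n).powersetCard 3) 2 r
      ((range ((r+3)/2)).powersetCard 2 ∪ (Ico ((r+3)/2) (r+2)).powersetCard 2) := by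
  classical
  intro J hJ
  set a := (r+3)/2 with ha_def
  obtain ⟨hJS, hJ2⟩ := mem_powersetCard.mp hJ
  have hJn : J ∈ (range n).powersetCard 2 := by
    rw [mem_powersetCard]
    exact ⟨hJS.trans (by intro z hz; rw [mem_range] at *; omega), hJ2⟩
  by_cases h1 : J ⊆ range a
  · exact subset_bootStep (mem_union_left _ (mem_powersetCard.mpr ⟨h1, hJ2⟩))
  by_cases h2 : J ⊆ Ico a (r+2)
  · exact subset_bootStep (mem_union_right _ (mem_powersetCard.mpr ⟨h2, hJ2⟩))
  obtain ⟨x, hxJ, hx⟩ := not_subset.mp h2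
  obtain ⟨y, hyJ, hy⟩ := not_subset.mp h1
  have hxr : x < r+2 := mem_range.mp (hJS hxJ)
  have hyr : y < r+2 := mem_range.mp (hJS hyJ)
  have hxa : x < a := by rw [mem_Ico] at hx; omega
  have hya : a ≤ y := by rw [mem_range] at hy; omega
  have hxy : x ≠ y := by omega
  apply add_pair hJn (W := (range (r+2)) \ J)
  · rw [card_sdiff_of_subset hJS, card_range, hJ2]; omega
  · intro w hw
    have := mem_range.mp (mem_sdiff.mp hw).1
    rw [mem_range]; omega
  · exact fun w hw => (mem_sdiff.mp hw).2
  · intro w hw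
    obtain ⟨hwS, hwJ⟩ := mem_sdiff.mp hw
    have hwr : w < r+2 := mem_range.mp hwS
    by_cases hwa : w < a
    · refine ⟨{w, x}, mem_union_left _ (mem_powersetCard.mpr ⟨?_, ?_⟩), ?_, mem_insert_self _ _⟩
      · intro z hz
        rcases mem_insert.mp hz with rfl | hz
        · exact mem_range.mpr hwa
        · rw [mem_singleton] at hz; subst hz; exact mem_range.mpr hxa
      · exact card_pair (fun h => hwJ (h ▸ hxJ))
      · intro z hz
        rcases mem_insert.mp hz with rfl | hz
        · exact mem_insert_self _ _
        · rw [mem_singleton] at hz; subst hz; exact mem_insert_of_mem hxJ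
    · refine ⟨{w, y}, mem_union_right _ (mem_powersetCard.mpr ⟨?_, ?_⟩), ?_, mem_insert_self _ _⟩
      · intro z hz
        rcases mem_insert.mp hz with rfl | hz
        · exact mem_Ico.mpr ⟨by omega, hwr⟩
        · rw [mem_singleton] at hz; subst hz; exact mem_Ico.mpr ⟨hya, hyr⟩
      · exact card_pair (fun h => hwJ (h ▸ hyJ))
      · intro z hz
        rcases mem_insert.mp hz with rfl | hz
        · exact mem_insert_self _ _
        · rw [mem_singleton] at hz; subst hz; exact mem_insert_of_mem hyJ

lemma stage2 (r n : ℕ) (A : Finset (Finset ℕ))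
    (hA : (range (r+2)).powersetCard 2 ⊆ A) :
    ∀ J ∈ (range n).powersetCard 2, (∃ u ∈ J, u < r+2) →
      J ∈ bootStep (range n) ((range n).powersetCard 3) 2 r A := by
  classical
  intro J hJ hmeet
  obtain ⟨u, huJ, huS⟩ := hmeet
  obtain ⟨hJn, hJ2⟩ := mem_powersetCard.mp hJ
  by_cases hall : J ⊆ range (r+2)
  · exact subset_bootStep (hA (mem_powersetCard.mpr ⟨hall, hJ2⟩))
  obtain ⟨z, hzJ, hz⟩ := not_subset.mp hall
  have hzr : r+2 ≤ z := by rw [mem_range] at hz; omega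
  have huz : u ≠ z := by omega
  have hJuz : J = {u, z} := by
    refine (eq_of_subset_of_card_le ?_ ?_).symm
    · intro w hw
      rcases mem_insert.mp hw with rfl | hw
      · exact huJ
      · rw [mem_singleton] at hw; subst hw; exact hzJ
    · rw [hJ2, card_pair huz]
  apply add_pair hJ (W := (range (r+2)).erase u)
  · rw [card_erase_of_mem (mem_range.mpr huS), card_range]; omega
  · intro w hw
    have := mem_range.mp (mem_of_mem_erase hw)
    have := mem_range.mp (hJn huJ)
    rw [mem_range]
    have := mem_range.mp (hJn hzJ)
    omega
  · intro w hw
    obtain ⟨hwu, hwS⟩ := mem_erase.mp hw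
    have hwr : w < r+2 := mem_range.mp hwS
    rw [hJuz]
    intro hwmem
    rcases mem_insert.mp hwmem with rfl | hwmem
    · exact hwu rfl
    · rw [mem_singleton] at hwmem; omega
  · intro w hw
    obtain ⟨hwu, hwS⟩ := mem_erase.mp hw
    have hwr : w < r+2 := mem_range.mp hwS
    refine ⟨{w, u}, hA (mem_powersetCard.mpr ⟨?_, card_pair hwu⟩), ?_, mem_insert_self _ _⟩
    · intro v hv
      rcases mem_insert.mp hv with rfl | hv
      · exact mem_range.mpr hwr
      · rw [mem_singleton] at hv; subst hv; exact mem_range.mpr huS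
    · intro v hv
      rcases mem_insert.mp hv with rfl | hv
      · exact mem_insert_self _ _
      · rw [mem_singleton] at hv; subst hv; exact mem_insert_of_mem huJ

lemma stage3 (r n : ℕ) (hn : r+2 ≤ n) (A : Finset (Finset ℕ))
    (hA : ∀ e ∈ (range n).powersetCard 2, (∃ u ∈ e, u < r+2) → e ∈ A) :
    (range n).powersetCard 2 ⊆ bootStep (range n) ((range n).powersetCard 3) 2 r A := by
  classical
  intro J hJ
  by_cases hmeet : ∃ u ∈ J, u < r+2
  · exact subset_bootStep (hA J hJ hmeet)
  push_neg at hmeet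
  obtain ⟨hJn, hJ2⟩ := mem_powersetCard.mp hJ
  obtain ⟨x, y, hxy, hJeq⟩ := card_eq_two.mp hJ2
  have hxJ : x ∈ J := by rw [hJeq]; exact mem_insert_self _ _
  apply add_pair hJ (W := range (r+2))
  · rw [card_range]; omega
  · intro w hw; rw [mem_range] at *; omega
  · intro w hw
    have hwr := mem_range.mp hw
    intro hwJ
    exact absurd hwr (not_lt.mpr (hmeet w hwJ))
  · intro w hw
    have hwr := mem_range.mp hw
    have hwx : w ≠ x := by have := hmeet x hxJ; omega
    refine ⟨{w, x}, hA _ (mem_powersetCard.mpr ⟨?_, card_pair hwx⟩) ⟨w, mem_insert_self _ _, hwr⟩,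
      ?_, mem_insert_self _ _⟩
    · intro v hv
      rcases mem_insert.mp hv with rfl | hv
      · rw [mem_range]; omega
      · rw [mem_singleton] at hv; subst hv; exact hJn hxJ
    · intro v hv
      rcases mem_insert.mp hv with rfl | hv
      · exact mem_insert_self _ _
      · rw [mem_singleton] at hv; subst hv; exact mem_insert_of_mem hxJ

lemma upper (r n : ℕ) (hn : r + 2 ≤ n) :
    ∃ A0 : Finset (Finset ℕ), A0 ⊆ (range n).powersetCard 2 ∧
      A0.card = lb r ∧ Percolates (range n) 3 2 r A0 := by
  classical
  set a := (r+3)/2 with ha_def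
  set A0 := (range a).powersetCard 2 ∪ (Ico a (r+2)).powersetCard 2 with hA0_def
  have hSn : range (r+2) ⊆ range n := by intro z hz; rw [mem_range] at *; omega
  have hA0pairs : A0 ⊆ (range n).powersetCard 2 := by
    apply union_subset
    · apply powersetCard_mono
      intro z hz; rw [mem_range] at *; omega
    · apply powersetCard_mono
      intro z hz; rw [mem_Ico] at hz; rw [mem_range]; omega
  have hcard : A0.card = lb r := by
    have hdisj : Disjoint ((range a).powersetCard 2) ((Ico a (r+2)).powersetCard 2) := by
      rw [disjoint_left]
      intro e he1 he2
      obtain ⟨h1, hc⟩ := mem_powersetCard.mp he1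
      obtain ⟨h2, -⟩ := mem_powersetCard.mp he2
      obtain ⟨z, hz⟩ := card_pos.mp (by omega : 0 < e.card)
      have := mem_range.mp (h1 hz)
      have := (mem_Ico.mp (h2 hz)).1
      omega
    rw [hA0_def, card_union_of_disjoint hdisj, card_powersetCard, card_powersetCard,
      card_range, Nat.card_Ico, ha_def]
    rfl
  refine ⟨A0, hA0pairs, hcard, 3, ?_⟩
  set Vn := range n with hVn
  set G1 := bootStep Vn (Vn.powersetCard 3) 2 r A0 with hG1
  set G2 := bootStep Vn (Vn.powersetCard 3) 2 r G1 with hG2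
  set G3 := bootStep Vn (Vn.powersetCard 3) 2 r G2 with hG3
  have hproc3 : compProc Vn 3 2 r A0 3 = G3 := by
    rw [show (3:ℕ) = 2+1 from rfl, compProc_succ, show (2:ℕ) = 1+1 from rfl, compProc_succ,
      show (1:ℕ) = 0+1 from rfl, compProc_succ, compProc_zero]
  rw [hproc3]
  apply Subset.antisymm
  · have h := compProc_subset_pairs (V := Vn) (k := 3) (j := 2)
      (r := r) (A0 := A0) hA0pairs 3
    rwa [hproc3] at h
  · apply stage3 r n hn G2
    intro e he hemeet
    have h2 := stage2 r n G1 ?_ e he hemeet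
    · rwa [← hG2] at h2
    · intro e' he'
      have h1 := stage1 r n hn he'
      rwa [← hG1] at h1

end Upper

section LowerBound

lemma sim {V : Finset ℕ} {r : ℕ} {x y : ℕ}
    (A0 : Finset (Finset ℕ)) (t : ℕ) :
    ∃ s, (compProc V 3 2 r A0 t).filter (fun e => x ∉ e ∧ y ∉ e)
      ⊆ compProc ((V.erase x).erase y) 3 2 (r-2)
          (A0.filter (fun e => x ∉ e ∧ y ∉ e)) s := by
  classical
  induction t with
  | zero => exact ⟨0, by rw [compProc_zero, compProc_zero]⟩
  | succ t ih =>
    obtain ⟨s, hs⟩ := ih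
    refine ⟨s+1, ?_⟩
    intro J hJ
    rw [mem_filter] at hJ
    obtain ⟨hJstep, hxJ, hyJ⟩ := hJ
    rw [compProc_succ] at hJstep
    rw [compProc_succ]
    unfold bootStep at hJstep ⊢
    rcases mem_union.mp hJstep with hold | hnew
    · exact mem_union_left _ (hs (mem_filter.mpr ⟨hold, hxJ, hyJ⟩))
    rw [mem_filter] at hnew
    obtain ⟨hJpair, K, Js, hKinj, hJsinj, hall⟩ := hnew
    obtain ⟨hJV, hJ2⟩ := mem_powersetCard.mp hJpair
    have hJV' : J ∈ ((V.erase x).erase y).powersetCard 2 := by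
      rw [mem_powersetCard]
      refine ⟨fun z hz => ?_, hJ2⟩
      rw [mem_erase, mem_erase]
      exact ⟨fun h => hyJ (h ▸ hz), fun h => hxJ (h ▸ hz), hJV hz⟩
    have hKmem : ∀ i, K i ⊆ V ∧ (K i).card = 3 := fun i => mem_powersetCard.mp (hall i).1
    have hJK : ∀ i, J ⊆ K i := fun i => (union_subset_iff.mp (hall i).2.2).2
    have hJsK : ∀ i, Js i ⊆ K i := fun i => (union_subset_iff.mp (hall i).2.2).1
    have hxuniq : ∀ i i', x ∈ K i → x ∈ K i' → i = i' := by
      intro i i' hi hi'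
      have hcx : (insert x J).card = 3 := by rw [card_insert_of_notMem hxJ, hJ2]
      have h1 : insert x J = K i :=
        eq_of_subset_of_card_le (insert_subset hi (hJK i)) (by rw [hcx, (hKmem i).2])
      have h2 : insert x J = K i' :=
        eq_of_subset_of_card_le (insert_subset hi' (hJK i')) (by rw [hcx, (hKmem i').2])
      exact hKinj (h1.symm.trans h2)
    have hyuniq : ∀ i i', y ∈ K i → y ∈ K i' → i = i' := by
      intro i i' hi hi'
      have hcy : (insert y J).card = 3 := by rw [card_insert_of_notMem hyJ, hJ2]
      have h1 : insert y J = K i :=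
        eq_of_subset_of_card_le (insert_subset hi (hJK i)) (by rw [hcy, (hKmem i).2])
      have h2 : insert y J = K i' :=
        eq_of_subset_of_card_le (insert_subset hi' (hJK i')) (by rw [hcy, (hKmem i').2])
      exact hKinj (h1.symm.trans h2)
    have hbad : ((univ : Finset (Fin r)).filter (fun i => x ∈ K i ∨ y ∈ K i)).card ≤ 2 := by
      rw [filter_or]
      refine le_trans (card_union_le _ _) ?_
      have hx1 : ((univ : Finset (Fin r)).filter (fun i => x ∈ K i)).card ≤ 1 := by
        refine card_le_one.mpr ?_
        intro i hi i' hi'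
        rw [mem_filter] at hi hi'
        exact hxuniq _ _ hi.2 hi'.2
      have hy1 : ((univ : Finset (Fin r)).filter (fun i => y ∈ K i)).card ≤ 1 := by
        refine card_le_one.mpr ?_
        intro i hi i' hi'
        rw [mem_filter] at hi hi'
        exact hyuniq _ _ hi.2 hi'.2
      omega
    have hgoodcard : r - 2 ≤
        ((univ : Finset (Fin r)).filter (fun i => ¬(x ∈ K i ∨ y ∈ K i))).card := by
      have hsplit := card_filter_add_card_filter_not
        (s := (univ : Finset (Fin r))) (p := fun i => x ∈ K i ∨ y ∈ K i)
      have hcu : (univ : Finset (Fin r)).card = r := by simp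
      omega
    obtain ⟨G, hGsub, hGcard⟩ := Finset.exists_subset_card_eq hgoodcard
    let g : Fin (r-2) ≃o {i // i ∈ G} := G.orderIsoOfFin hGcard
    have hgood : ∀ i : Fin (r-2), x ∉ K (g i) ∧ y ∉ K (g i) := by
      intro i
      have hmem := hGsub (g i).2
      rw [mem_filter] at hmem
      exact ⟨fun h => hmem.2 (Or.inl h), fun h => hmem.2 (Or.inr h)⟩
    refine mem_union_right _ (mem_filter.mpr ⟨hJV', fun i => K ((g i : Fin r)),
      fun i => Js ((g i : Fin r)), ?_, ?_, ?_⟩)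
    · intro i i' h
      have h' : ((g i : {i // i ∈ G}) : Fin r) = ((g i' : {i // i ∈ G}) : Fin r) := hKinj h
      exact g.injective (Subtype.ext h')
    · intro i i' h
      have h' : ((g i : {i // i ∈ G}) : Fin r) = ((g i' : {i // i ∈ G}) : Fin r) := hJsinj h
      exact g.injective (Subtype.ext h')
    · intro i
      refine ⟨?_, ?_, (hall _).2.2⟩
      · rw [mem_powersetCard]
        refine ⟨fun z hz => ?_, (hKmem _).2⟩
        rw [mem_erase, mem_erase]
        exact ⟨fun h => (hgood i).2 (h ▸ hz), fun h => (hgood i).1 (h ▸ hz), (hKmem _).1 hz⟩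
      · exact hs (mem_filter.mpr ⟨(hall _).2.1,
          fun h => (hgood i).1 (hJsK _ h), fun h => (hgood i).2 (hJsK _ h)⟩)

lemma lower : ∀ r : ℕ, 1 ≤ r → ∀ V : Finset ℕ, 2*r+2 ≤ V.card →
    ∀ A0 : Finset (Finset ℕ), A0 ⊆ V.powersetCard 2 → Percolates V 3 2 r A0 →
      lb r ≤ A0.card := by
  intro r
  induction r using Nat.strong_induction_on with
  | _ r IH =>
  intro hr V hV A0 hA0 hperc
  classical
  by_cases hfix : bootStep V (V.powersetCard 3) 2 r A0 = A0
  · obtain ⟨t, ht⟩ := hperc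
    rw [compProc_fix hfix] at ht
    have hce : A0.card = (V.card).choose 2 := by rw [ht, card_powersetCard]
    rw [hce]
    exact lb_le_choose hV
  · obtain ⟨J, hJstep, hJA0⟩ :=
      exists_of_ssubset (ssubset_of_subset_of_ne subset_bootStep (Ne.symm hfix))
    have hJnew : J ∈ (V.powersetCard 2).filter (fun J =>
        ∃ K : Fin r → Finset ℕ, ∃ Js : Fin r → Finset ℕ,
          Function.Injective K ∧ Function.Injective Js ∧
          ∀ i : Fin r, K i ∈ V.powersetCard 3 ∧ Js i ∈ A0 ∧ Js i ∪ J ⊆ K i) := by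
      unfold bootStep at hJstep
      rcases mem_union.mp hJstep with h | h
      · exact absurd h hJA0
      · exact h
    rw [mem_filter] at hJnew
    obtain ⟨hJpair, K, Js, hKinj, hJsinj, hall⟩ := hJnew
    obtain ⟨hJV, hJ2⟩ := mem_powersetCard.mp hJpair
    obtain ⟨x, y, hxy, hJeq⟩ := card_eq_two.mp hJ2
    have hxJ : x ∈ J := by rw [hJeq]; exact mem_insert_self _ _
    have hyJ : y ∈ J := by rw [hJeq]; exact mem_insert_of_mem (mem_singleton_self _)
    have hxV : x ∈ V := hJV hxJ
    have hyV : y ∈ V := hJV hyJ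
    have hJK : ∀ i, J ⊆ K i := fun i => (union_subset_iff.mp (hall i).2.2).2
    have hJsK : ∀ i, Js i ⊆ K i := fun i => (union_subset_iff.mp (hall i).2.2).1
    -- the witnesses all touch {x, y}
    have htouch : ∀ i : Fin r, ¬(x ∉ Js i ∧ y ∉ Js i) := by
      rintro i ⟨hx', hy'⟩
      have hKmem := mem_powersetCard.mp (hall i).1
      have hsub : Js i ⊆ K i \ J := by
        intro z hz
        rw [mem_sdiff]
        refine ⟨hJsK i hz, fun hzJ => ?_⟩
        rw [hJeq] at hzJ
        rcases mem_insert.mp hzJ with rfl | hzJ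
        · exact hx' hz
        · rw [mem_singleton] at hzJ; subst hzJ; exact hy' hz
      have hc1 : (K i \ J).card = 1 := by
        rw [card_sdiff_of_subset (hJK i), hKmem.2, hJ2]
      have hc2 : (Js i).card = 2 := (mem_powersetCard.mp (hA0 (hall i).2.1)).2
      have := card_le_card hsub
      omega
    have hrT : r ≤ (A0.filter (fun e => ¬(x ∉ e ∧ y ∉ e))).card := by
      have hcu : ((univ : Finset (Fin r))).card = r := by simp
      rw [← hcu]
      refine card_le_card_of_injOn Js ?_ (hJsinj.injOn)
      intro i _
      rw [mem_coe, mem_filter]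
      exact ⟨(hall i).2.1, htouch i⟩
    have hsplit := card_filter_add_card_filter_not
      (s := A0) (p := fun e => x ∉ e ∧ y ∉ e)
    by_cases hr3 : 3 ≤ r
    · -- descent
      obtain ⟨t, ht⟩ := hperc
      obtain ⟨s, hs⟩ := sim (V := V) (r := r) (x := x) (y := y) A0 t
      rw [ht] at hs
      set V' := (V.erase x).erase y with hV'
      set H0 := A0.filter (fun e => x ∉ e ∧ y ∉ e) with hH0
      have hH0pairs : H0 ⊆ V'.powersetCard 2 := by
        intro e he
        rw [mem_filter] at he
        obtain ⟨heA, hex, hey⟩ := he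
        obtain ⟨heV, hec⟩ := mem_powersetCard.mp (hA0 heA)
        rw [mem_powersetCard]
        refine ⟨fun z hz => ?_, hec⟩
        rw [mem_erase, mem_erase]
        exact ⟨fun h => hey (h ▸ hz), fun h => hex (h ▸ hz), heV hz⟩
      have hfiltereq : (V.powersetCard 2).filter (fun e => x ∉ e ∧ y ∉ e)
          = V'.powersetCard 2 := by
        ext e
        rw [mem_filter, mem_powersetCard, mem_powersetCard]
        constructor
        · rintro ⟨⟨heV, hec⟩, hex, hey⟩
          refine ⟨fun z hz => ?_, hec⟩
          rw [mem_erase, mem_erase]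
          exact ⟨fun h => hey (h ▸ hz), fun h => hex (h ▸ hz), heV hz⟩
        · rintro ⟨heV', hec⟩
          refine ⟨⟨fun z hz => ?_, hec⟩, fun hx' => ?_, fun hy' => ?_⟩
          · have := heV' hz
            rw [mem_erase, mem_erase] at this
            exact this.2.2
          · have := heV' hx'
            rw [mem_erase, mem_erase] at this
            exact this.2.1 rfl
          · have := heV' hy'
            rw [mem_erase, mem_erase] at this
            exact this.1 rfl
      rw [hfiltereq] at hs
      have hPsub : compProc V' 3 2 (r-2) H0 s ⊆ V'.powersetCard 2 :=
        compProc_subset_pairs hH0pairs s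
      have hPperc : Percolates V' 3 2 (r-2) H0 := ⟨s, Subset.antisymm hPsub hs⟩
      have hyVx : y ∈ V.erase x := mem_erase.mpr ⟨Ne.symm hxy, hyV⟩
      have hV'card : V'.card = V.card - 2 := by
        rw [hV', card_erase_of_mem hyVx, card_erase_of_mem hxV]
        omega
      have hIH := IH (r-2) (by omega) (by omega) V' (by omega) H0 hH0pairs hPperc
      have hlbrec : lb r = lb (r-2) + r := by
        have h := lb_rec' (r-3)
        rw [show r-3+3 = r by omega, show r-3+1 = r-2 by omega] at h
        omega
      have hTle : (A0.filter (fun e => ¬(x ∉ e ∧ y ∉ e))).card ≤ A0.card :=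
        card_le_card (filter_subset _ _)
      omega
    · -- r = 1 or r = 2
      have hlble : lb r ≤ r := by
        interval_cases r
        · rw [lb_one]
        · rw [lb_two]
      have hTle : (A0.filter (fun e => ¬(x ∉ e ∧ y ∉ e))).card ≤ A0.card :=
        card_le_card (filter_subset _ _)
      omega

end LowerBound

theorem stmt15 (r : ℕ) (hr : 1 ≤ r) :
    ∃ n0, ∀ n ≥ n0,
      4 * ellMin n 3 2 r = (r + 1) ^ 2 - (if Even r then 1 else 0) := by
  refine ⟨2*r+4, fun n hn => ?_⟩
  have hell : ellMin n 3 2 r = lb r := by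
    obtain ⟨A0, hA0sub, hA0card, hA0perc⟩ := upper r n (by omega)
    have hmem : lb r ∈ {m | ∃ A0 : Finset (Finset ℕ), A0 ⊆ (range n).powersetCard 2 ∧
        A0.card = m ∧ Percolates (range n) 3 2 r A0} := ⟨A0, hA0sub, hA0card, hA0perc⟩
    apply le_antisymm
    · exact Nat.sInf_le hmem
    · apply le_csInf ⟨lb r, hmem⟩
      rintro m ⟨B0, hB0sub, rfl, hB0perc⟩
      exact lower r hr (range n) (by rw [card_range]; omega) B0 hB0sub hB0perc
  rw [hell, lb4]
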